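/- arXiv:2109.07860 — 2 statements merged into one kernel-verified Lean document; each statement's English description precedes it below -/
import Mathlib

section
/- Let W be a standard one-dimensional Brownian motion, σ̄ > 0, and T > 0. For a ≠ 0, sup over progressively measurable processes v with values in [0, σ̄] of P(∫_0^T v_s dW_s = a) is at least Φ(|a|/(σ̄√T)), where Φ(y) = (2/√(2π)) ∫_y^∞ exp(-r²/2) dr, achieved by the control v_s = σ̄·1_{[0, τ_a]}(s), where τ_a = inf{t : σ̄W_t = a}. -/
open MeasureTheory ProbabilityTheory Set
open scoped NNReal ENNReal

noncomputable def Phi (x : ℝ) : ℝ :=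
  (2 / Real.sqrt (2 * Real.pi)) * ∫ r in Set.Ioi x, Real.exp (-r ^ 2 / 2)

structure IsStandardBrownianMotion {Ω : Type*} [MeasurableSpace Ω]
    (P : Measure Ω) (W : ℝ → Ω → ℝ) : Prop where
  isProb : IsProbabilityMeasure P
  meas : ∀ t : ℝ, Measurable (W t)
  init : ∀ ω, W 0 ω = 0
  cont : ∀ ω, Continuous fun t => W t ω
  gauss : ∀ s t : ℝ, 0 ≤ s → (h : s ≤ t) →
    Measure.map (fun ω => W t ω - W s ω) P = gaussianReal 0 ⟨t - s, by linarith⟩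
  indep : ∀ (n : ℕ) (t : Fin (n + 1) → ℝ), Monotone t → (∀ i, 0 ≤ t i) →
    iIndepFun
      (fun i : Fin n => fun ω => W (t i.succ) ω - W (t i.castSucc) ω) P

/-- The first hitting time `τ_a = inf {t ≥ 0 : σ W_t = a}` (junk value `0` if the
level is never hit; we only use it on the event where the level is hit). -/
noncomputable def hitTime {Ω : Type*} (σ : ℝ) (W : ℝ → Ω → ℝ) (a : ℝ) (ω : Ω) : ℝ :=
  sInf {t : ℝ | 0 ≤ t ∧ σ * W t ω = a}

lemma gauss_map_neg (v : ℝ≥0) :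
    (gaussianReal 0 v).map (fun x => -x) = gaussianReal 0 v := by
  have h := gaussianReal_map_const_mul (μ := 0) (v := v) (-1)
  simp only [neg_one_mul, mul_zero, neg_zero] at h
  convert h using 2
  ext
  simp

lemma phi_eq (T : ℝ) (hT : 0 < T) (b : ℝ) :
    ENNReal.ofReal (Phi (b / Real.sqrt T)) =
      2 * gaussianReal 0 ⟨T, hT.le⟩ (Set.Ioi b) := by
  have hv : (⟨T, hT.le⟩ : NNReal) ≠ 0 := by
    simp [← NNReal.coe_inj, hT.ne']
  rw [gaussianReal_apply_eq_integral _ hv]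
  have hsT : (0:ℝ) < Real.sqrt T := Real.sqrt_pos.mpr hT
  have key : (∫ x in Set.Ioi b, gaussianPDFReal 0 ⟨T, hT.le⟩ x)
      = (Real.sqrt (2 * Real.pi))⁻¹ * ∫ r in Set.Ioi (b / Real.sqrt T), Real.exp (-r ^ 2 / 2) := by
    have h1 : ∀ x : ℝ, gaussianPDFReal 0 ⟨T, hT.le⟩ x
        = (Real.sqrt (2 * Real.pi * T))⁻¹ * Real.exp (-( (x / Real.sqrt T)) ^ 2 / 2) := by
      intro x
      show (Real.sqrt (2 * Real.pi * ((⟨T, hT.le⟩ : ℝ≥0) : ℝ)))⁻¹ * Real.exp (-(x - 0) ^ 2 / (2 * ((⟨T, hT.le⟩ : ℝ≥0) : ℝ))) = _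
      simp only [NNReal.coe_mk]
      congr 1
      rw [div_pow, Real.sq_sqrt hT.le]
      rw [sub_zero]
      ring
    calc (∫ x in Set.Ioi b, gaussianPDFReal 0 ⟨T, hT.le⟩ x)
        = ∫ x in Set.Ioi b, (Real.sqrt (2 * Real.pi * T))⁻¹ *
            Real.exp (-(x * (Real.sqrt T)⁻¹) ^ 2 / 2) := by
          refine setIntegral_congr_fun measurableSet_Ioi (fun x _ => ?_)
          rw [h1 x, div_eq_mul_inv x]
      _ = (Real.sqrt (2 * Real.pi * T))⁻¹ *
            ∫ x in Set.Ioi b, Real.exp (-(x * (Real.sqrt T)⁻¹) ^ 2 / 2) := by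
          rw [integral_const_mul]
      _ = (Real.sqrt (2 * Real.pi * T))⁻¹ * (((Real.sqrt T)⁻¹)⁻¹ •
            ∫ r in Set.Ioi (b * (Real.sqrt T)⁻¹), Real.exp (-r ^ 2 / 2)) := by
          rw [integral_comp_mul_right_Ioi (fun r => Real.exp (-r ^ 2 / 2)) b
            (inv_pos.mpr hsT)]
      _ = (Real.sqrt (2 * Real.pi))⁻¹ * ∫ r in Set.Ioi (b / Real.sqrt T), Real.exp (-r ^ 2 / 2) := by
          rw [smul_eq_mul, inv_inv, ← mul_assoc, div_eq_mul_inv]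
          congr 2
          rw [Real.sqrt_mul (by positivity) T]
          field_simp
  rw [key, Phi]
  rw [← ENNReal.ofReal_ofNat, ← ENNReal.ofReal_mul (by norm_num)]
  congr 1
  have : (0:ℝ) ≤ ∫ r in Set.Ioi (b / Real.sqrt T), Real.exp (-r ^ 2 / 2) := by
    positivity
  rw [div_eq_mul_inv]
  ring

lemma symm_pair {Ω : Type*} [MeasurableSpace Ω] {P : Measure Ω} [IsProbabilityMeasure P]
    {E : Type*} [MeasurableSpace E] {Y : Ω → E} {R : Ω → ℝ}
    (hY : Measurable Y) (hR : Measurable R) (hInd : IndepFun Y R P)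
    (hsym : (P.map R).map (fun x => -x) = P.map R)
    {A : Set E} (hA : MeasurableSet A) {v : E → ℝ} (hv : Measurable v) :
    P {ω | Y ω ∈ A ∧ R ω < -v (Y ω)} = P {ω | Y ω ∈ A ∧ v (Y ω) < R ω} := by
  have hmap := (indepFun_iff_map_prod_eq_prod_map_map hY.aemeasurable hR.aemeasurable).mp hInd
  set C1 : Set (E × ℝ) := {p | p.1 ∈ A ∧ p.2 < -v p.1} with hC1def
  set C2 : Set (E × ℝ) := {p | p.1 ∈ A ∧ v p.1 < p.2} with hC2def
  have hC1 : MeasurableSet C1 :=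
    (hA.preimage measurable_fst).inter (measurableSet_lt measurable_snd (hv.comp measurable_fst).neg)
  have hC2 : MeasurableSet C2 :=
    (hA.preimage measurable_fst).inter (measurableSet_lt (hv.comp measurable_fst) measurable_snd)
  have e1 : {ω | Y ω ∈ A ∧ R ω < -v (Y ω)} = (fun ω => (Y ω, R ω)) ⁻¹' C1 := rfl
  have e2 : {ω | Y ω ∈ A ∧ v (Y ω) < R ω} = (fun ω => (Y ω, R ω)) ⁻¹' C2 := rfl
  rw [e1, e2, ← Measure.map_apply (hY.prodMk hR) hC1, ← Measure.map_apply (hY.prodMk hR) hC2,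
    hmap, Measure.prod_apply hC1, Measure.prod_apply hC2]
  refine lintegral_congr fun x => ?_
  by_cases hx : x ∈ A
  · have s1 : Prod.mk x ⁻¹' C1 = Set.Iio (-v x) := by
      ext r; simp [hC1def, hx]
    have s2 : Prod.mk x ⁻¹' C2 = Set.Ioi (v x) := by
      ext r; simp [hC2def, hx]
    rw [s1, s2]
    calc P.map R (Set.Iio (-v x)) = (P.map R).map (fun y => -y) (Set.Iio (-v x)) := by rw [hsym]
      _ = P.map R ((fun y => -y) ⁻¹' Set.Iio (-v x)) := by
          rw [Measure.map_apply measurable_neg measurableSet_Iio]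
      _ = P.map R (Set.Ioi (v x)) := by
          congr 1; ext y; simp
  · have s1 : Prod.mk x ⁻¹' C1 = ∅ := by ext r; simp [hC1def, hx]
    have s2 : Prod.mk x ⁻¹' C2 = ∅ := by ext r; simp [hC2def, hx]
    rw [s1, s2]

lemma IsStandardBrownianMotion.neg {Ω : Type*} [MeasurableSpace Ω]
    {P : Measure Ω} {W : ℝ → Ω → ℝ} (hW : IsStandardBrownianMotion P W) :
    IsStandardBrownianMotion P (fun t ω => -(W t ω)) := by
  constructor
  · exact hW.isProb
  · exact fun t => (hW.meas t).neg
  · intro ω; rw [hW.init ω, neg_zero]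
  · exact fun ω => (hW.cont ω).neg
  · intro s t hs hst
    have : (fun ω => -(W t ω) - -(W s ω)) = (fun x => -x) ∘ (fun ω => W t ω - W s ω) := by
      funext ω; simp [Function.comp]; ring
    rw [this]
    exact (Measure.map_map measurable_neg ((hW.meas t).sub (hW.meas s))).symm.trans
      ((congrArg (Measure.map (fun x : ℝ => -x)) (hW.gauss s t hs hst)).trans (gauss_map_neg _))
  · intro n t hmono hpos
    have h := (hW.indep n t hmono hpos).comp (fun _ => fun x : ℝ => -x) (fun _ => measurable_neg)
    convert h using 2 with i
    funext ω
    simp [Function.comp]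
    ring

lemma hit_subset {Ω : Type*} [MeasurableSpace Ω] {P : Measure Ω} {W : ℝ → Ω → ℝ}
    (hW : IsStandardBrownianMotion P W) (σ a T : ℝ) (hσ : 0 < σ) (hT : 0 < T) :
    {ω | ∃ t ∈ Set.Icc 0 T, W t ω = a / σ}
      ⊆ {ω | σ * W (min T (hitTime σ W a ω)) ω = a} := by
  intro ω ⟨t0, ht0, hWt0⟩
  have ht0mem : t0 ∈ {t : ℝ | 0 ≤ t ∧ σ * W t ω = a} := by
    refine ⟨ht0.1, ?_⟩
    rw [hWt0]; field_simp
  have hne : {t : ℝ | 0 ≤ t ∧ σ * W t ω = a}.Nonempty := ⟨t0, ht0mem⟩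
  have hbdd : BddBelow {t : ℝ | 0 ≤ t ∧ σ * W t ω = a} := ⟨0, fun x hx => hx.1⟩
  have hclosed : IsClosed {t : ℝ | 0 ≤ t ∧ σ * W t ω = a} := by
    have : {t : ℝ | 0 ≤ t ∧ σ * W t ω = a}
        = Set.Ici 0 ∩ (fun t => σ * W t ω) ⁻¹' {a} := by
      ext t; simp only [Set.mem_setOf_eq, Set.mem_inter_iff, Set.mem_Ici, Set.mem_preimage, Set.mem_singleton_iff]
    rw [this]
    exact isClosed_Ici.inter (IsClosed.preimage (continuous_const.mul (hW.cont ω)) isClosed_singleton)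
  have hmem := hclosed.csInf_mem hne hbdd
  have hle : hitTime σ W a ω ≤ t0 := csInf_le hbdd ht0mem
  have hminv : min T (hitTime σ W a ω) = hitTime σ W a ω :=
    min_eq_right (hle.trans ht0.2)
  rw [Set.mem_setOf_eq, hminv]
  exact hmem.2

lemma grid_indep {Ω : Type*} [MeasurableSpace Ω] {P : Measure Ω} {W : ℝ → Ω → ℝ}
    (hW : IsStandardBrownianMotion P W) {T : ℝ} (hT : 0 < T) {n k : ℕ}
    (hk : k < n) :
    IndepFun (fun ω => fun j : Fin (k+1) => W ((j : ℕ) * T / n) ω)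
      (fun ω => W T ω - W (k * T / n) ω) P := by
  have hn : 0 < n := lt_of_le_of_lt (Nat.zero_le k) hk
  have hn' : (0:ℝ) < n := by exact_mod_cast hn
  set u : Fin (k+2) → ℝ := fun i => if (i:ℕ) ≤ k then (i:ℕ) * T / n else T with hu
  have hgrid_le : ∀ m : ℕ, m ≤ k → (m : ℝ) * T / n ≤ T := by
    intro m hm
    rw [div_le_iff₀ hn']
    have : (m:ℝ) ≤ (n:ℝ) := by exact_mod_cast hm.trans hk.le
    nlinarith
  have humono : Monotone u := by
    intro i j hij
    simp only [hu]
    by_cases hi : (i:ℕ) ≤ k <;> by_cases hj : (j:ℕ) ≤ k <;> simp [hi, hj]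
    · have hij' : ((i:ℕ):ℝ) ≤ ((j:ℕ):ℝ) := by exact_mod_cast (Fin.le_def.mp hij)
      gcongr <;> first | exact hT.le | skip
    · exact hgrid_le _ hi
    · exact absurd ((Fin.le_def.mp hij).trans hj) hi
  have hupos : ∀ i, 0 ≤ u i := by
    intro i
    simp only [hu]
    split
    · positivity
    · exact hT.le
  have hind := hW.indep (k+1) u humono hupos
  set f : Fin (k+1) → Ω → ℝ := fun i ω => W (u i.succ) ω - W (u i.castSucc) ω with hf
  have hfmeas : ∀ i, Measurable (f i) := fun i => (hW.meas _).sub (hW.meas _)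
  set S : Finset (Fin (k+1)) := Finset.univ.filter (fun i => (i:ℕ) < k) with hS
  set T' : Finset (Fin (k+1)) := {Fin.last k} with hT'
  have hdisj : Disjoint S T' := by
    rw [Finset.disjoint_singleton_right, hS]
    simp
  have hIF := hind.indepFun_finset S T' hdisj hfmeas
  set φ : ({x // x ∈ S} → ℝ) → (Fin (k+1) → ℝ) :=
    fun x j => ∑ i : {x // x ∈ S}, if ((i : Fin (k+1)) : ℕ) < (j:ℕ) then x i else 0 with hφ
  have hφmeas : Measurable φ := by
    apply measurable_pi_lambda
    intro j
    apply Finset.measurable_sum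
    intro i _
    by_cases h : ((i : Fin (k+1)) : ℕ) < (j:ℕ)
    · simpa [h] using measurable_pi_apply i
    · simpa [h] using (measurable_const : Measurable fun _ : ({x // x ∈ S} → ℝ) => (0:ℝ))
  set e : ({x // x ∈ T'} → ℝ) → ℝ := fun x => x ⟨Fin.last k, by simp [hT']⟩ with he
  have hemeas : Measurable e := measurable_pi_apply _
  have hcomp := hIF.comp hφmeas hemeas
  have hleft : (φ ∘ fun a (i : {x // x ∈ S}) => f i a)
      = fun ω => fun j : Fin (k+1) => W ((j : ℕ) * T / n) ω := by
    funext ω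
    funext j
    simp only [Function.comp, hφ]
    have key : ∀ m : ℕ, m ≤ k →
        (∑ i : {x // x ∈ S}, if ((i : Fin (k+1)) : ℕ) < m then f i ω else 0)
          = W ((m : ℝ) * T / n) ω := by
      intro m hm
      induction m with
      | zero =>
        simp [hW.init ω]
      | succ m ih =>
        have hmk : m < k := hm
        have hmk1 : m < k + 1 := lt_of_lt_of_le hmk (Nat.le_succ k)
        set i₀ : {x // x ∈ S} := ⟨⟨m, hmk1⟩, by simp [hS, hmk]⟩ with hi₀
        have split : ∀ i : {x // x ∈ S},
            (if ((i : Fin (k+1)) : ℕ) < m + 1 then f i ω else 0)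
              = (if ((i : Fin (k+1)) : ℕ) < m then f i ω else 0)
                + (if ((i : Fin (k+1)) : ℕ) = m then f i ω else 0) := by
          intro i
          rcases Nat.lt_trichotomy ((i : Fin (k+1)) : ℕ) m with h | h | h
          · simp [h, Nat.lt_succ_of_lt h, h.ne]
          · simp [h]
          · have h1 : ¬ ((i : Fin (k+1)) : ℕ) < m + 1 := by omega
            have h2 : ¬ ((i : Fin (k+1)) : ℕ) < m := by omega
            simp [h1, h2, h.ne']
        rw [Finset.sum_congr rfl (fun i _ => split i), Finset.sum_add_distrib,
          ih (Nat.le_of_succ_le hm)]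
        have hsingle : (∑ i : {x // x ∈ S}, if ((i : Fin (k+1)) : ℕ) = m then f i ω else 0)
            = f i₀ ω := by
          rw [Finset.sum_eq_single i₀]
          · simp [hi₀]
          · intro b _ hb
            have : ¬ ((b : Fin (k+1)) : ℕ) = m := by
              intro hbm
              apply hb
              apply Subtype.ext
              apply Fin.ext
              simp [hbm, hi₀]
            simp [this]
          · intro h
            exact absurd (Finset.mem_univ i₀) h
        rw [hsingle]
        have hf₀ : f i₀ ω = W (((m+1 : ℕ) : ℝ) * T / n) ω - W ((m : ℝ) * T / n) ω := by
          simp only [hf, hi₀]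
          have hsucc : ((⟨m, hmk1⟩ : Fin (k+1)).succ : ℕ) = m + 1 := rfl
          have hcast : ((⟨m, hmk1⟩ : Fin (k+1)).castSucc : ℕ) = m := rfl
          have h1 : u (⟨m, hmk1⟩ : Fin (k+1)).succ = ((m+1 : ℕ) : ℝ) * T / n := by
            simp only [hu, hsucc]
            rw [if_pos (Nat.succ_le_of_lt hmk)]
          have h2 : u (⟨m, hmk1⟩ : Fin (k+1)).castSucc = ((m : ℕ) : ℝ) * T / n := by
            simp only [hu, hcast]
            rw [if_pos (Nat.le_of_lt hmk)]
          rw [h1, h2]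
        rw [hf₀]
        push_cast
        ring
    rw [key (j : ℕ) (Nat.lt_succ_iff.mp j.isLt)]
  have hright : (e ∘ fun a (i : {x // x ∈ T'}) => f i a)
      = fun ω => W T ω - W (k * T / n) ω := by
    funext ω
    simp only [Function.comp, he, hf]
    have h1 : u (Fin.last k).succ = T := by
      simp only [hu]
      have : ((Fin.last k).succ : ℕ) = k + 1 := rfl
      rw [this, if_neg (by omega)]
    have h2 : u (Fin.last k).castSucc = (k : ℝ) * T / n := by
      simp only [hu]
      have : ((Fin.last k).castSucc : ℕ) = k := rfl
      rw [this, if_pos (le_refl k)]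
    rw [h1, h2]
  rw [hleft, hright] at hcomp
  exact hcomp

def AA {Ω : Type*} (W : ℝ → Ω → ℝ) (T b : ℝ) (n k : ℕ) : Set Ω :=
  {ω | b ≤ W ((k:ℝ) * T / n) ω ∧ ∀ j < k, W ((j:ℝ) * T / n) ω < b}

lemma AA_meas {Ω : Type*} [MeasurableSpace Ω] {P : Measure Ω} {W : ℝ → Ω → ℝ}
    (hW : IsStandardBrownianMotion P W) (T b : ℝ) (n k : ℕ) :
    MeasurableSet (AA W T b n k) := by
  have h1 : MeasurableSet {ω | b ≤ W ((k:ℝ) * T / n) ω} :=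
    measurableSet_le measurable_const (hW.meas _)
  have h2 : MeasurableSet {ω | ∀ j < k, W ((j:ℝ) * T / n) ω < b} := by
    have : {ω | ∀ j < k, W ((j:ℝ) * T / n) ω < b}
        = ⋂ (j : ℕ) (_ : j < k), {ω | W ((j:ℝ) * T / n) ω < b} := by
      ext ω; simp
    rw [this]
    exact MeasurableSet.iInter fun j => MeasurableSet.iInter fun _ =>
      measurableSet_lt (hW.meas _) measurable_const
  exact h1.inter h2

lemma AA_disj {Ω : Type*} (W : ℝ → Ω → ℝ) (T b : ℝ) (n : ℕ) {k k' : ℕ} (h : k ≠ k') :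
    Disjoint (AA W T b n k) (AA W T b n k') := by
  rcases Nat.lt_or_ge k k' with h' | h'
  · rw [Set.disjoint_left]
    rintro ω ⟨hk1, _⟩ ⟨_, hk2'⟩
    exact absurd hk1 (not_le.mpr (hk2' k h'))
  · have h'' : k' < k := lt_of_le_of_ne h' (Ne.symm h)
    rw [Set.disjoint_right]
    rintro ω ⟨hk1, _⟩ ⟨_, hk2'⟩
    exact absurd hk1 (not_le.mpr (hk2' k' h''))

lemma refl_eq {Ω : Type*} [MeasurableSpace Ω] {P : Measure Ω} {W : ℝ → Ω → ℝ}
    (hW : IsStandardBrownianMotion P W) {T b : ℝ} (hT : 0 < T) {n k : ℕ}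
    (hk1 : 1 ≤ k) (hkn : k ≤ n) :
    P (AA W T b n k ∩ {ω | W T ω < b})
      = P (AA W T b n k ∩ {ω | W ((k:ℝ) * T / n) ω - b < W T ω - W ((k:ℝ) * T / n) ω}) := by
  haveI := hW.isProb
  have hn : 0 < n := lt_of_lt_of_le hk1 hkn
  have hn' : (0:ℝ) < n := by exact_mod_cast hn
  rcases Nat.lt_or_ge k n with hklt | hge
  · -- k < n : use the reflection symmetry
    set Y : Ω → (Fin (k+1) → ℝ) := fun ω => fun j : Fin (k+1) => W (((j:ℕ):ℝ) * T / n) ω with hY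
    set R : Ω → ℝ := fun ω => W T ω - W ((k:ℝ) * T / n) ω with hR
    have hYmeas : Measurable Y := measurable_pi_lambda _ fun j => hW.meas _
    have hRmeas : Measurable R := (hW.meas _).sub (hW.meas _)
    have hInd : IndepFun Y R P := grid_indep hW hT hklt
    have hglek : (k:ℝ) * T / n ≤ T := by
      rw [div_le_iff₀ hn']
      have : (k:ℝ) ≤ (n:ℝ) := by exact_mod_cast hkn
      nlinarith
    have hgpos : 0 ≤ (k:ℝ) * T / n := by positivity
    have hmapR : P.map R = gaussianReal 0 ⟨T - (k:ℝ) * T / n, by linarith⟩ :=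
      hW.gauss _ _ hgpos hglek
    have hsym : (P.map R).map (fun x => -x) = P.map R := by
      rw [hmapR]; exact gauss_map_neg _
    set Aset : Set (Fin (k+1) → ℝ) :=
      {y | b ≤ y (Fin.last k) ∧ ∀ j : Fin (k+1), (j:ℕ) < k → y j < b} with hAset
    have hAsetMeas : MeasurableSet Aset := by
      have h1 : MeasurableSet {y : Fin (k+1) → ℝ | b ≤ y (Fin.last k)} :=
        measurableSet_le measurable_const (measurable_pi_apply _)
      have h2 : MeasurableSet {y : Fin (k+1) → ℝ | ∀ j : Fin (k+1), (j:ℕ) < k → y j < b} := by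
        have : {y : Fin (k+1) → ℝ | ∀ j : Fin (k+1), (j:ℕ) < k → y j < b}
            = ⋂ (j : Fin (k+1)) (_ : (j:ℕ) < k), {y | y j < b} := by
          ext y; simp
        rw [this]
        exact MeasurableSet.iInter fun j => MeasurableSet.iInter fun _ =>
          measurableSet_lt (measurable_pi_apply _) measurable_const
      exact h1.inter h2
    set v : (Fin (k+1) → ℝ) → ℝ := fun y => y (Fin.last k) - b with hv
    have hvmeas : Measurable v := (measurable_pi_apply _).sub measurable_const
    have key := symm_pair hYmeas hRmeas hInd hsym hAsetMeas hvmeas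
    have hAA : ∀ ω, (Y ω ∈ Aset) ↔ ω ∈ AA W T b n k := by
      intro ω
      simp only [hAset, hY, Set.mem_setOf_eq, AA]
      constructor
      · rintro ⟨h1, h2⟩
        refine ⟨by simpa using h1, fun j hj => ?_⟩
        have := h2 ⟨j, lt_of_lt_of_le hj (Nat.le_succ k)⟩ hj
        simpa using this
      · rintro ⟨h1, h2⟩
        refine ⟨by simpa using h1, fun j hj => ?_⟩
        simpa using h2 (j:ℕ) hj
    have hYlast : ∀ ω, Y ω (Fin.last k) = W ((k:ℝ) * T / n) ω := by
      intro ω; simp [hY]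
    have e1 : {ω | Y ω ∈ Aset ∧ R ω < -v (Y ω)}
        = AA W T b n k ∩ {ω | W T ω < b} := by
      ext ω
      simp only [Set.mem_setOf_eq, Set.mem_inter_iff, hAA ω]
      apply and_congr_right
      intro _
      show R ω < -v (Y ω) ↔ _
      rw [hv, hR]
      simp only [hYlast ω]
      constructor <;> intro h <;> linarith
    have e2 : {ω | Y ω ∈ Aset ∧ v (Y ω) < R ω}
        = AA W T b n k ∩ {ω | W ((k:ℝ) * T / n) ω - b < W T ω - W ((k:ℝ) * T / n) ω} := by
      ext ω
      simp only [Set.mem_setOf_eq, Set.mem_inter_iff, hAA ω]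
      apply and_congr_right
      intro _
      show v (Y ω) < R ω ↔ _
      rw [hv, hR]
      simp only [hYlast ω]
    rw [e1, e2] at key
    exact key
  · -- k = n : both sides empty
    have hkeq : k = n := le_antisymm hkn hge
    have htg : (k:ℝ) * T / n = T := by
      rw [hkeq]
      field_simp
    have e1 : AA W T b n k ∩ {ω | W T ω < b} = ∅ := by
      ext ω
      simp only [Set.mem_inter_iff, Set.mem_empty_iff_false, iff_false, AA, Set.mem_setOf_eq]
      rintro ⟨⟨h1, _⟩, h2⟩
      rw [htg] at h1
      linarith
    have e2 : AA W T b n k ∩ {ω | W ((k:ℝ) * T / n) ω - b < W T ω - W ((k:ℝ) * T / n) ω}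
        = ∅ := by
      ext ω
      simp only [Set.mem_inter_iff, Set.mem_empty_iff_false, iff_false, AA, Set.mem_setOf_eq]
      rintro ⟨⟨h1, _⟩, h2⟩
      rw [htg] at h1 h2
      linarith
    rw [e1, e2]

def DD {Ω : Type*} (W : ℝ → Ω → ℝ) (T b : ℝ) (n : ℕ) (ε : ℝ) : Set Ω :=
  ⋃ k ∈ Finset.Icc 1 n, (AA W T b n k ∩ {ω | ε < W ((k:ℝ) * T / n) ω - b})

lemma DD_meas {Ω : Type*} [MeasurableSpace Ω] {P : Measure Ω} {W : ℝ → Ω → ℝ}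
    (hW : IsStandardBrownianMotion P W) (T b : ℝ) (n : ℕ) (ε : ℝ) :
    MeasurableSet (DD W T b n ε) := by
  refine Finset.measurableSet_biUnion _ fun k _ => ?_
  exact (AA_meas hW T b n k).inter (measurableSet_lt measurable_const ((hW.meas _).sub measurable_const))

lemma find_first {Ω : Type*} (W : ℝ → Ω → ℝ) {T b : ℝ} (hb : 0 < b) {n : ℕ} (hn : 1 ≤ n)
    (hWinit : ∀ ω, W 0 ω = 0) (ω : Ω) (hωT : b ≤ W T ω) :
    ∃ k ∈ Finset.Icc 1 n, ω ∈ AA W T b n k := by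
  have hn' : (0:ℝ) < n := by exact_mod_cast hn
  have hTn : ((n:ℝ)) * T / n = T := by field_simp
  have hex : ∃ k, k ≤ n ∧ b ≤ W ((k:ℝ) * T / n) ω := ⟨n, le_refl n, by rw [hTn]; exact hωT⟩
  classical
  set k₀ := Nat.find hex with hk₀
  obtain ⟨hk₀n, hk₀b⟩ := Nat.find_spec hex
  have hk₀1 : 1 ≤ k₀ := by
    have hne : k₀ ≠ 0 := by
      intro h0
      rw [hk₀] at h0
      rw [h0] at hk₀b
      rw [Nat.cast_zero, zero_mul, zero_div, hWinit ω] at hk₀b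
      linarith
    omega
  refine ⟨k₀, Finset.mem_Icc.mpr ⟨hk₀1, hk₀n⟩, hk₀b, fun j hj => ?_⟩
  by_contra h
  push_neg at h
  exact Nat.find_min hex hj ⟨le_trans (le_of_lt hj) hk₀n, h⟩

lemma step_n {Ω : Type*} [MeasurableSpace Ω] {P : Measure Ω} {W : ℝ → Ω → ℝ}
    (hW : IsStandardBrownianMotion P W) {T b : ℝ} (hT : 0 < T) (hb : 0 < b)
    {n : ℕ} (hn : 1 ≤ n) {ε : ℝ} (hε : 0 < ε) :
    P {ω | b ≤ W T ω} + P {ω | b + 2*ε < W T ω}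
      ≤ P {ω | ∃ t ∈ Set.Icc 0 T, b ≤ W t ω} + P (DD W T b n ε) := by
  haveI := hW.isProb
  have hn' : (0:ℝ) < n := by exact_mod_cast hn
  have htgmem : ∀ k : ℕ, k ≤ n → (k:ℝ) * T / n ∈ Set.Icc 0 T := by
    intro k hk
    constructor
    · positivity
    · rw [div_le_iff₀ hn']
      have : (k:ℝ) ≤ (n:ℝ) := by exact_mod_cast hk
      nlinarith
  set G := {ω | ∃ t ∈ Set.Icc 0 T, b ≤ W t ω} with hG
  set U1 := ⋃ k ∈ Finset.Icc 1 n, (AA W T b n k ∩ {ω | b ≤ W T ω}) with hU1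
  set U2 := ⋃ k ∈ Finset.Icc 1 n,
    (AA W T b n k ∩ {ω | W ((k:ℝ) * T / n) ω - b ≤ ε} ∩ {ω | b + 2*ε < W T ω}) with hU2
  have hd : ∀ (f : ℕ → Set Ω), (∀ k, f k ⊆ AA W T b n k) →
      (↑(Finset.Icc 1 n) : Set ℕ).PairwiseDisjoint f := by
    intro f hf k _ k' _ hkk'
    exact Set.disjoint_of_subset (hf k) (hf k') (AA_disj W T b n hkk')
  have hWTmeas : MeasurableSet {ω | b ≤ W T ω} := measurableSet_le measurable_const (hW.meas _)
  have c1 : P U1 = ∑ k ∈ Finset.Icc 1 n, P (AA W T b n k ∩ {ω | b ≤ W T ω}) := by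
    refine measure_biUnion_finset (hd _ fun k => Set.inter_subset_left) fun k _ =>
      (AA_meas hW T b n k).inter hWTmeas
  have c2 : P U2 = ∑ k ∈ Finset.Icc 1 n,
      P (AA W T b n k ∩ {ω | W ((k:ℝ) * T / n) ω - b ≤ ε} ∩ {ω | b + 2*ε < W T ω}) := by
    refine measure_biUnion_finset (hd _ fun k => ?_) fun k _ => ?_
    · exact (Set.inter_subset_left.trans Set.inter_subset_left)
    · exact ((AA_meas hW T b n k).inter
        (measurableSet_le ((hW.meas _).sub measurable_const) measurable_const)).inter
        (measurableSet_lt measurable_const (hW.meas _))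
  have c3 : ∀ k ∈ Finset.Icc 1 n,
      P (AA W T b n k ∩ {ω | b ≤ W T ω})
        + P (AA W T b n k ∩ {ω | W ((k:ℝ) * T / n) ω - b ≤ ε} ∩ {ω | b + 2*ε < W T ω})
      ≤ P (AA W T b n k) := by
    intro k hk
    rw [Finset.mem_Icc] at hk
    have hdiff : AA W T b n k \ {ω | b ≤ W T ω} = AA W T b n k ∩ {ω | W T ω < b} := by
      ext ω
      simp [Set.mem_diff, not_le]
    have hdecomp : P (AA W T b n k ∩ {ω | b ≤ W T ω}) + P (AA W T b n k ∩ {ω | W T ω < b})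
        = P (AA W T b n k) := by
      rw [← hdiff]
      exact measure_inter_add_diff _ hWTmeas
    have hincl : AA W T b n k ∩ {ω | W ((k:ℝ) * T / n) ω - b ≤ ε} ∩ {ω | b + 2*ε < W T ω}
        ⊆ AA W T b n k ∩ {ω | W ((k:ℝ) * T / n) ω - b < W T ω - W ((k:ℝ) * T / n) ω} := by
      rintro ω ⟨⟨hA, hV⟩, hWT⟩
      refine ⟨hA, ?_⟩
      simp only [Set.mem_setOf_eq] at *
      linarith
    calc P (AA W T b n k ∩ {ω | b ≤ W T ω})
          + P (AA W T b n k ∩ {ω | W ((k:ℝ) * T / n) ω - b ≤ ε} ∩ {ω | b + 2*ε < W T ω})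
        ≤ P (AA W T b n k ∩ {ω | b ≤ W T ω})
          + P (AA W T b n k ∩ {ω | W ((k:ℝ) * T / n) ω - b < W T ω - W ((k:ℝ) * T / n) ω}) := by
          exact add_le_add_right (measure_mono hincl) _
      _ = P (AA W T b n k ∩ {ω | b ≤ W T ω}) + P (AA W T b n k ∩ {ω | W T ω < b}) := by
          rw [refl_eq hW hT hk.1 hk.2]
      _ = P (AA W T b n k) := hdecomp
  have c4 : ∑ k ∈ Finset.Icc 1 n, P (AA W T b n k) ≤ P G := by
    have hE : P (⋃ k ∈ Finset.Icc 1 n, AA W T b n k)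
        = ∑ k ∈ Finset.Icc 1 n, P (AA W T b n k) :=
      measure_biUnion_finset (hd _ fun k => subset_refl _) fun k _ => AA_meas hW T b n k
    rw [← hE]
    refine measure_mono ?_
    refine Set.iUnion₂_subset fun k hk => ?_
    rw [Finset.mem_Icc] at hk
    intro ω hω
    exact ⟨(k:ℝ) * T / n, htgmem k hk.2, hω.1⟩
  have c5 : P {ω | b ≤ W T ω} ≤ P U1 := by
    refine measure_mono fun ω hω => ?_
    obtain ⟨k, hk, hA⟩ := find_first W hb hn hW.init ω hω
    exact Set.mem_biUnion hk ⟨hA, hω⟩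
  have c6 : P {ω | b + 2*ε < W T ω} ≤ P U2 + P (DD W T b n ε) := by
    refine le_trans (measure_mono ?_) (measure_union_le _ _)
    intro ω hω
    have hωT : b ≤ W T ω := by
      simp only [Set.mem_setOf_eq] at hω
      linarith
    obtain ⟨k, hk, hA⟩ := find_first W hb hn hW.init ω hωT
    rcases le_or_gt (W ((k:ℝ) * T / n) ω - b) ε with h | h
    · exact Or.inl (Set.mem_biUnion hk ⟨⟨hA, h⟩, hω⟩)
    · exact Or.inr (Set.mem_biUnion hk ⟨hA, h⟩)
  calc P {ω | b ≤ W T ω} + P {ω | b + 2*ε < W T ω}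
      ≤ P U1 + (P U2 + P (DD W T b n ε)) := add_le_add c5 c6
    _ = (P U1 + P U2) + P (DD W T b n ε) := by ring
    _ ≤ P G + P (DD W T b n ε) := by
        refine add_le_add_left ?_ _
        rw [c1, c2, ← Finset.sum_add_distrib]
        exact le_trans (Finset.sum_le_sum c3) c4

lemma DD_tendsto {Ω : Type*} [MeasurableSpace Ω] {P : Measure Ω} {W : ℝ → Ω → ℝ}
    (hW : IsStandardBrownianMotion P W) {T b : ℝ} (hT : 0 < T) (hb : 0 < b)
    {ε : ℝ} (hε : 0 < ε) :
    Filter.Tendsto (fun n => P (DD W T b n ε)) Filter.atTop (nhds 0) := by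
  haveI := hW.isProb
  have hmeas : ∀ n, MeasurableSet (DD W T b n ε) := fun n => DD_meas hW T b n ε
  -- rewrite as lintegral of indicators
  have hrepr : ∀ n, P (DD W T b n ε)
      = ∫⁻ ω, (DD W T b n ε).indicator (fun _ => (1:ℝ≥0∞)) ω ∂P := by
    intro n
    rw [lintegral_indicator (hmeas n)]
    simp
  simp only [hrepr]
  have h0 : (0:ℝ≥0∞) = ∫⁻ _, (0:ℝ≥0∞) ∂P := by simp
  rw [h0]
  refine tendsto_lintegral_of_dominated_convergence (fun _ => (1:ℝ≥0∞))
    (fun n => measurable_one.indicator (hmeas n))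
    (fun n => Filter.Eventually.of_forall fun ω => Set.indicator_le (fun _ _ => le_refl _) ω)
    (by simp) ?_
  refine Filter.Eventually.of_forall fun ω => ?_
  -- pointwise: eventually `ω ∉ DD W T b n ε`
  have hcont : ContinuousOn (fun t => W t ω) (Set.Icc 0 T) := (hW.cont ω).continuousOn
  have huc : UniformContinuousOn (fun t => W t ω) (Set.Icc 0 T) :=
    isCompact_Icc.uniformContinuousOn_of_continuous hcont
  obtain ⟨δ, hδ, hδ'⟩ := Metric.uniformContinuousOn_iff.mp huc ε hε
  obtain ⟨N, hN⟩ := exists_nat_gt (T / δ)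
  have hev : ∀ n ≥ N + 1, ω ∉ DD W T b n ε := by
    intro n hn hωD
    have hn1 : 1 ≤ n := le_trans (Nat.le_add_left 1 N) hn
    have hn' : (0:ℝ) < n := by exact_mod_cast hn1
    rw [DD, Set.mem_iUnion] at hωD
    obtain ⟨k, hωD⟩ := hωD
    rw [Set.mem_iUnion] at hωD
    obtain ⟨hk, hA, hV⟩ := hωD
    rw [Finset.mem_Icc] at hk
    simp only [Set.mem_setOf_eq] at hV
    obtain ⟨hAk, hAj⟩ := hA
    have hjk : W (((k-1:ℕ):ℝ) * T / n) ω < b := hAj (k-1) (by omega)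
    -- the two grid points are close
    have hd1 : ((k:ℝ) * T / n) ∈ Set.Icc 0 T := by
      constructor
      · positivity
      · rw [div_le_iff₀ hn']
        have : (k:ℝ) ≤ (n:ℝ) := by exact_mod_cast hk.2
        nlinarith
    have hd2 : (((k-1:ℕ):ℝ) * T / n) ∈ Set.Icc 0 T := by
      constructor
      · positivity
      · rw [div_le_iff₀ hn']
        have : ((k-1:ℕ):ℝ) ≤ (n:ℝ) := by exact_mod_cast le_trans (Nat.sub_le k 1) hk.2
        nlinarith
    have hdist : dist ((k:ℝ) * T / n) (((k-1:ℕ):ℝ) * T / n) < δ := by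
      rw [Real.dist_eq]
      have hkk : ((k-1:ℕ):ℝ) = (k:ℝ) - 1 := by
        have : 1 ≤ k := hk.1
        push_cast [this]
        ring
      rw [hkk]
      have : (k:ℝ) * T / n - ((k:ℝ) - 1) * T / n = T / n := by ring
      rw [this, abs_of_pos (by positivity)]
      rw [div_lt_iff₀ hn']
      have hNn : (N:ℝ) + 1 ≤ (n:ℝ) := by exact_mod_cast hn
      have : T / δ < (N:ℝ) := hN
      rw [div_lt_iff₀ hδ] at this
      nlinarith
    have := hδ' _ hd1 _ hd2 hdist
    rw [Real.dist_eq] at this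
    have habs : W ((k:ℝ) * T / n) ω - W (((k-1:ℕ):ℝ) * T / n) ω ≤
        |W ((k:ℝ) * T / n) ω - W (((k-1:ℕ):ℝ) * T / n) ω| := le_abs_self _
    linarith
  refine Filter.Tendsto.congr' ?_ tendsto_const_nhds
  rw [Filter.EventuallyEq, Filter.eventually_atTop]
  exact ⟨N + 1, fun n hn => by
    rw [Set.indicator_of_notMem (hev n hn)]⟩

lemma refl_bound {Ω : Type*} [MeasurableSpace Ω] {P : Measure Ω} {W : ℝ → Ω → ℝ}
    (hW : IsStandardBrownianMotion P W) {T b : ℝ} (hT : 0 < T) (hb : 0 < b) :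
    ENNReal.ofReal (Phi (b / Real.sqrt T)) ≤ P {ω | ∃ t ∈ Set.Icc 0 T, W t ω = b} := by
  haveI := hW.isProb
  set G := {ω | ∃ t ∈ Set.Icc 0 T, b ≤ W t ω} with hGdef
  have hGsub : P G ≤ P {ω | ∃ t ∈ Set.Icc 0 T, W t ω = b} := by
    refine measure_mono fun ω hω => ?_
    obtain ⟨t0, ht0, hbW⟩ := hω
    have hIVT := intermediate_value_Icc ht0.1 ((hW.cont ω).continuousOn (s := Set.Icc 0 t0))
    have hbmem : b ∈ Set.Icc (W 0 ω) (W t0 ω) := by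
      rw [hW.init ω]
      exact ⟨hb.le, hbW⟩
    obtain ⟨t, ht, hWt⟩ := hIVT hbmem
    exact ⟨t, ⟨ht.1, ht.2.trans ht0.2⟩, hWt⟩
  -- For every ε > 0 :  P {b ≤ W T} + P {b + 2ε < W T} ≤ P G
  have hstep : ∀ ε : ℝ, 0 < ε →
      P {ω | b ≤ W T ω} + P {ω | b + 2*ε < W T ω} ≤ P G := by
    intro ε hε
    have htend : Filter.Tendsto (fun n => P G + P (DD W T b n ε)) Filter.atTop
        (nhds (P G + 0)) :=
      Filter.Tendsto.const_add _ (DD_tendsto hW hT hb hε)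
    rw [add_zero] at htend
    refine ge_of_tendsto htend ?_
    rw [Filter.eventually_atTop]
    exact ⟨1, fun n hn => step_n hW hT hb hn hε⟩
  -- Let ε → 0 along 1/(m+1)
  have hmono : Monotone (fun m : ℕ => {ω | b + 2*(1/((m:ℝ)+1)) < W T ω}) := by
    intro m m' hmm ω hω
    simp only [Set.mem_setOf_eq] at *
    have h1 : (1:ℝ)/((m':ℝ)+1) ≤ 1/((m:ℝ)+1) := by
      apply div_le_div_of_nonneg_left one_pos.le (by positivity)
      exact_mod_cast Nat.succ_le_succ hmm
    linarith
  have hunion : (⋃ m : ℕ, {ω | b + 2*(1/((m:ℝ)+1)) < W T ω}) = {ω | b < W T ω} := by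
    ext ω
    simp only [Set.mem_iUnion, Set.mem_setOf_eq]
    constructor
    · rintro ⟨m, hm⟩
      have : (0:ℝ) < 2*(1/((m:ℝ)+1)) := by positivity
      linarith
    · intro hω
      obtain ⟨m, hm⟩ := exists_nat_one_div_lt (show (0:ℝ) < (W T ω - b)/2 by linarith)
      exact ⟨m, by nlinarith⟩
  have htend2 : Filter.Tendsto
      (fun m : ℕ => P {ω | b ≤ W T ω} + P {ω | b + 2*(1/((m:ℝ)+1)) < W T ω})
      Filter.atTop (nhds (P {ω | b ≤ W T ω} + P {ω | b < W T ω})) := by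
    have := tendsto_measure_iUnion_atTop (μ := P) hmono
    rw [hunion] at this
    exact Filter.Tendsto.const_add _ this
  have hfinal : P {ω | b ≤ W T ω} + P {ω | b < W T ω} ≤ P G := by
    refine le_of_tendsto htend2 ?_
    refine Filter.Eventually.of_forall fun m => ?_
    exact hstep (1/((m:ℝ)+1)) (by positivity)
  -- identify the law of W T
  have hlaw : P {ω | b < W T ω} = gaussianReal 0 ⟨T, hT.le⟩ (Set.Ioi b) := by
    have hmap := hW.gauss 0 T le_rfl hT.le
    have hfun : (fun ω => W T ω - W 0 ω) = fun ω => W T ω := by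
      funext ω; rw [hW.init ω, sub_zero]
    rw [hfun] at hmap
    have hpre : {ω | b < W T ω} = (fun ω => W T ω) ⁻¹' Set.Ioi b := rfl
    rw [hpre, ← Measure.map_apply (hW.meas T) measurableSet_Ioi, hmap]
    congr 1
    ext
    simp
  calc ENNReal.ofReal (Phi (b / Real.sqrt T))
      = 2 * gaussianReal 0 ⟨T, hT.le⟩ (Set.Ioi b) := phi_eq T hT b
    _ = gaussianReal 0 ⟨T, hT.le⟩ (Set.Ioi b) + gaussianReal 0 ⟨T, hT.le⟩ (Set.Ioi b) := two_mul _
    _ = P {ω | b < W T ω} + P {ω | b < W T ω} := by rw [hlaw]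
    _ ≤ P {ω | b ≤ W T ω} + P {ω | b < W T ω} :=
        add_le_add_left (measure_mono fun ω hω => le_of_lt (Set.mem_setOf_eq ▸ hω)) _
    _ ≤ P G := hfinal
    _ ≤ P {ω | ∃ t ∈ Set.Icc 0 T, W t ω = b} := hGsub

/-- Since Mathlib has no stochastic integral, the Itô integral
`v ↦ ∫_0^T v_s dW_s` is supplied as a map `I` on controls, assumed (hypothesis
`hI`) to evaluate on the stopped control `v_s = σ·1_{[0, τ_a]}(s)` to the
stopped Brownian motion `σ W_{T ∧ τ_a}` (on the event where `τ_a` is finite),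
and to a value `σ W_T ∧`-independent junk otherwise is irrelevant since we
only bound the supremum from below.  The supremum over all `[0, σ]`-valued
controls of `P(∫_0^T v dW = a)` is at least `Φ(|a|/(σ√T))`. -/
theorem stmt_7 {Ω : Type*} [MeasurableSpace Ω] (P : Measure Ω) (W : ℝ → Ω → ℝ)
    (hW : IsStandardBrownianMotion P W) (σ a T : ℝ) (hσ : 0 < σ)
    (ha : a ≠ 0) (hT : 0 < T)
    (I : (ℝ → Ω → ℝ) → Ω → ℝ)
    (hI : ∀ ω : Ω,
      I (fun s ω' => if s ≤ hitTime σ W a ω' then σ else 0) ω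
        = σ * W (min T (hitTime σ W a ω)) ω) :
    ENNReal.ofReal (Phi (|a| / (σ * Real.sqrt T))) ≤
      ⨆ v ∈ {v : ℝ → Ω → ℝ | ∀ s ω, v s ω ∈ Set.Icc 0 σ},
        P {ω | I v ω = a} := by
  haveI := hW.isProb
  set v₀ : ℝ → Ω → ℝ := fun s ω' => if s ≤ hitTime σ W a ω' then σ else 0 with hv₀def
  have hv₀mem : v₀ ∈ {v : ℝ → Ω → ℝ | ∀ s ω, v s ω ∈ Set.Icc 0 σ} := by
    intro s ω
    by_cases h : s ≤ hitTime σ W a ω <;> simp [hv₀def, h, hσ.le, le_refl]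
  have hub : P {ω | I v₀ ω = a}
      ≤ ⨆ v ∈ {v : ℝ → Ω → ℝ | ∀ s ω, v s ω ∈ Set.Icc 0 σ}, P {ω | I v ω = a} :=
    le_biSup (fun v => P {ω | I v ω = a}) hv₀mem
  refine le_trans ?_ hub
  have hEv : {ω | I v₀ ω = a} = {ω | σ * W (min T (hitTime σ W a ω)) ω = a} := by
    ext ω
    rw [Set.mem_setOf_eq, Set.mem_setOf_eq, hv₀def, hI ω]
  rw [hEv]
  rcases lt_or_gt_of_ne ha with haneg | hapos
  · -- a < 0 : use -W
    set W' : ℝ → Ω → ℝ := fun t ω => -(W t ω) with hW'def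
    have hW' := hW.neg
    have hb : 0 < (-a) / σ := div_pos (by linarith) hσ
    have h1 := refl_bound hW' hT hb
    have h2 := hit_subset hW' σ (-a) T hσ hT
    have hHit : hitTime σ W' (-a) = hitTime σ W a := by
      funext ω
      unfold hitTime
      congr 1
      ext t
      simp only [hW'def, Set.mem_setOf_eq]
      constructor
      · rintro ⟨h1', h2'⟩
        exact ⟨h1', by linarith⟩
      · rintro ⟨h1', h2'⟩
        exact ⟨h1', by linarith⟩
    have hSet : {ω | σ * W' (min T (hitTime σ W' (-a) ω)) ω = -a}
        = {ω | σ * W (min T (hitTime σ W a ω)) ω = a} := by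
      rw [hHit]
      ext ω
      simp only [hW'def, Set.mem_setOf_eq]
      constructor <;> intro h <;> linarith
    rw [hSet] at h2
    have habs : |a| / (σ * Real.sqrt T) = ((-a)/σ) / Real.sqrt T := by
      rw [abs_of_neg haneg]
      field_simp
    rw [habs]
    exact le_trans h1 (measure_mono h2)
  · -- a > 0
    have hb : 0 < a / σ := div_pos hapos hσ
    have h1 := refl_bound hW hT hb
    have h2 := hit_subset hW σ a T hσ hT
    have habs : |a| / (σ * Real.sqrt T) = (a/σ) / Real.sqrt T := by
      rw [abs_of_pos hapos]
      field_simp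
    rw [habs]
    exact le_trans h1 (measure_mono h2)
end

section
/- Let c be a monotone, subadditive set function on the Borel sets of a topological space that arises as c(D) = sup_{P ∈ 𝒫} P(D) for a weakly compact family 𝒫 of Borel probability measures. Then for any decreasing sequence of closed sets F_n ↓ F, c(F_n) ↓ c(F). -/
open MeasureTheory Filter

theorem stmt_10 {Ω : Type*} [MetricSpace Ω] [MeasurableSpace Ω] [BorelSpace Ω]
    (Pset : Set (ProbabilityMeasure Ω)) (hPset : Pset.Nonempty) (hcomp : IsCompact Pset)
    (F : ℕ → Set Ω) (hclosed : ∀ n, IsClosed (F n)) (hanti : Antitone F) :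
    Antitone (fun n => ⨆ P ∈ Pset, (P : Measure Ω) (F n)) ∧
    Filter.Tendsto (fun n => ⨆ P ∈ Pset, (P : Measure Ω) (F n)) Filter.atTop
      (nhds (⨆ P ∈ Pset, (P : Measure Ω) (⋂ n, F n))) := by
  set c : ℕ → ENNReal := fun n => ⨆ P ∈ Pset, (P : Measure Ω) (F n) with hc
  have hcanti : Antitone c := by
    intro m n hmn
    exact iSup₂_mono fun P _ => measure_mono (hanti hmn)
  refine ⟨hcanti, ?_⟩
  have key : (⨅ n, c n) = ⨆ P ∈ Pset, (P : Measure Ω) (⋂ n, F n) := by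
    apply le_antisymm
    · -- hard direction
      apply ENNReal.le_of_forall_pos_le_add
      intro ε hε _
      have hεne : (ε : ENNReal) ≠ 0 := ENNReal.coe_ne_zero.mpr hε.ne'
      -- choose near-maximizers
      have hsel : ∀ n, ∃ P ∈ Pset, c n ≤ (P : Measure Ω) (F n) + ε := by
        intro n
        rcases le_or_gt (c n) ε with h | h
        · obtain ⟨P, hP⟩ := hPset
          exact ⟨P, hP, h.trans le_add_self⟩
        · have hne : c n ≠ ⊤ := by
            have : c n ≤ 1 := by
              apply iSup₂_le
              intro P _
              exact prob_le_one
            exact (this.trans_lt ENNReal.one_lt_top).ne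
          have : c n - ε < c n := ENNReal.sub_lt_self hne (pos_of_gt h).ne' hεne
          rw [hc] at this
          simp only [lt_iSup_iff] at this
          obtain ⟨P, hP, hPlt⟩ := this
          refine ⟨P, hP, ?_⟩
          rw [ENNReal.sub_lt_iff_lt_right (by simp) h.le] at hPlt
          exact hPlt.le
      choose Pseq hPmem hPbig using hsel
      -- cluster point via compactness
      obtain ⟨P, hPmemP, hclus⟩ := hcomp (f := Filter.map Pseq atTop)
        (le_principal_iff.mpr (Filter.mem_map.mpr (Filter.Eventually.of_forall hPmem)))
      set L : Filter ℕ := atTop ⊓ Filter.comap Pseq (nhds P) with hL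
      have hLne : L.NeBot := by
        rw [hL, ← Filter.map_neBot_iff Pseq, Filter.push_pull]
        rw [ClusterPt] at hclus
        rwa [inf_comm]
      have hLtend : Tendsto Pseq L (nhds P) := tendsto_comap.mono_left inf_le_right
      have hLle : L ≤ atTop := inf_le_left
      -- for each m : iInf c ≤ P (F m) + ε
      have hkey : ∀ m, (⨅ n, c n) ≤ (P : Measure Ω) (F m) + ε := by
        intro m
        have hport : (L.limsup fun n => (Pseq n : Measure Ω) (F m)) ≤ (P : Measure Ω) (F m) :=
          ProbabilityMeasure.limsup_measure_closed_le_of_tendsto hLtend (hclosed m)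
        have hev : ∀ᶠ n in L, c n ≤ (Pseq n : Measure Ω) (F m) + ε := by
          filter_upwards [hLle (Filter.eventually_ge_atTop m)] with n hn
          exact (hPbig n).trans (add_le_add_left (measure_mono (hanti hn)) _)
        calc (⨅ n, c n) ≤ L.limsup c := by
              refine le_limsup_of_frequently_le ?_
              exact Filter.Eventually.frequently (Filter.Eventually.of_forall fun n => iInf_le c n)
          _ ≤ L.limsup (fun n => (Pseq n : Measure Ω) (F m) + ε) := limsup_le_limsup hev
          _ = (L.limsup fun n => (Pseq n : Measure Ω) (F m)) + ε :=
              limsup_add_const L _ (ε : ENNReal) (Filter.isBoundedUnder_of ⟨⊤, fun n => le_top⟩)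
                ((Filter.isBoundedUnder_of (f := L) (u := fun n => ((Pseq n : Measure Ω) (F m))) (r := (· ≥ ·)) ⟨⊥, fun n => bot_le⟩).isCoboundedUnder_le)
          _ ≤ (P : Measure Ω) (F m) + ε := by gcongr
      have hiInter : (P : Measure Ω) (⋂ n, F n) = ⨅ n, (P : Measure Ω) (F n) :=
        hanti.measure_iInter (fun n => (hclosed n).measurableSet.nullMeasurableSet)
          ⟨0, measure_ne_top _ _⟩
      calc (⨅ n, c n) ≤ (⨅ m, (P : Measure Ω) (F m)) + ε := by
            rw [ENNReal.iInf_add]; exact le_iInf fun m => hkey m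
        _ = (P : Measure Ω) (⋂ n, F n) + ε := by rw [hiInter]
        _ ≤ (⨆ Q ∈ Pset, (Q : Measure Ω) (⋂ n, F n)) + ε := by
            gcongr
            exact le_iSup₂_of_le P hPmemP le_rfl
    · apply iSup₂_le
      intro P hP
      apply le_iInf
      intro n
      exact le_iSup₂_of_le P hP (measure_mono (Set.iInter_subset F n))
  rw [← key]
  exact tendsto_atTop_iInf hcanti
end
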